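/- Let n be an even positive integer, V a real n×n circulant symmetric positive definite matrix, p a real number, P = I_{n/2} ⊕ (−I_{n/2}), and Q = V^{−p} P V^{p} P with block form Q = [[Q', Q''], [Q'', Q']] (n/2 × n/2 blocks), F = F_{n/2}. Then (Q' + Q''F)(Q' − Q''F) = I_{n/2}, i.e. Q' + Q''F is the inverse of Q' − Q''F. -/

import Mathlib

open Matrix

/-- The `m × m` flip matrix `F_m`: with 0-based indices, entry `(i,j)` is `1`
iff `i + j = m - 1`. -/
noncomputable def flipMat (m : ℕ) : Matrix (Fin m) (Fin m) ℝ :=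
  Matrix.of fun i j => if (i : ℕ) + (j : ℕ) = m - 1 then 1 else 0

/-- Real matrix power `M ^ p` defined via the continuous functional calculus
(spectral calculus). -/
noncomputable def mpow {k : ℕ} (M : Matrix (Fin k) (Fin k) ℝ) (p : ℝ) :
    Matrix (Fin k) (Fin k) ℝ :=
  cfc (fun x : ℝ => x ^ p) M

lemma flipMat_apply' (k : ℕ) (i j : Fin k) :
    flipMat k i j = if j = i.rev then 1 else 0 := by
  show (if (i : ℕ) + (j : ℕ) = k - 1 then (1:ℝ) else 0) = _
  refine if_congr ?_ rfl rfl
  have hi := i.isLt; have hj := j.isLt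
  rw [Fin.ext_iff, Fin.val_rev]
  omega

lemma flipMat_mul {k c : ℕ} (M : Matrix (Fin k) (Fin c) ℝ) :
    flipMat k * M = M.submatrix Fin.rev id := by
  ext i j
  rw [Matrix.mul_apply]
  simp [flipMat_apply', ite_mul, Finset.sum_ite_eq']

lemma mul_flipMat {k c : ℕ} (M : Matrix (Fin c) (Fin k) ℝ) :
    M * flipMat k = M.submatrix id Fin.rev := by
  ext i j
  rw [Matrix.mul_apply]
  have h : ∀ x : Fin k, (j = x.rev) = (x = j.rev) := fun x =>
    propext ⟨fun h => by simp [h], fun h => by simp [h]⟩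
  simp [flipMat_apply', h, mul_ite, Finset.sum_ite_eq']

lemma flipMat_mul_self (k : ℕ) : flipMat k * flipMat k = 1 := by
  rw [flipMat_mul]
  ext i j
  simp [flipMat_apply', Matrix.one_apply, eq_comm]

/-- `J * mpow V s * J = mpow V s` for `J` an orthogonal symmetric involution
commuting with `V` in the sense `J * V * J = V`. -/
lemma conj_mpow {k : ℕ} (V J : Matrix (Fin k) (Fin k) ℝ) (hVpd : V.PosDef)
    (hJJ : J * J = 1) (hJstar : star J = J) (hJV : J * V * J = V) (s : ℝ) :
    J * mpow V s * J = mpow V s := by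
  have hselfadj : IsSelfAdjoint V := hVpd.isHermitian
  have hcont : ∀ f : ℝ → ℝ, ContinuousOn f (spectrum ℝ V) :=
    (Matrix.finite_real_spectrum).continuousOn
  let φ : Matrix (Fin k) (Fin k) ℝ →⋆ₐ[ℝ] Matrix (Fin k) (Fin k) ℝ :=
  { toFun := fun M => J * M * J
    map_one' := by show J * 1 * J = 1; rw [mul_one, hJJ]
    map_mul' := fun M N => by
      calc J * (M * N) * J = J * (M * 1 * N) * J := by rw [mul_one]
        _ = J * (M * (J * J) * N) * J := by rw [hJJ]
        _ = (J * M * J) * (J * N * J) := by noncomm_ring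
    map_zero' := by simp
    map_add' := fun M N => by noncomm_ring
    commutes' := fun r => by
      simp only [Algebra.algebraMap_eq_smul_one]
      rw [mul_smul_comm, smul_mul_assoc, mul_one, hJJ]
    map_star' := fun M => by
      show J * star M * J = star (J * M * J)
      rw [StarMul.star_mul, StarMul.star_mul, hJstar, mul_assoc] }
  have hφcont : Continuous φ := by
    show Continuous fun M : Matrix (Fin k) (Fin k) ℝ => J * M * J
    exact (continuous_const.matrix_mul continuous_id).matrix_mul continuous_const
  have hφV : φ V = V := hJV
  have key := StarAlgHom.map_cfc φ (fun x : ℝ => x ^ s) V (hcont _) hφcont hselfadj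
      (by rw [hφV]; exact hselfadj)
  rw [hφV] at key
  exact key

lemma mpow_mul_mpow_neg {k : ℕ} (V : Matrix (Fin k) (Fin k) ℝ) (hVpd : V.PosDef) (s : ℝ) :
    mpow V s * mpow V (-s) = 1 := by
  have hselfadj : IsSelfAdjoint V := hVpd.isHermitian
  have hspec : ∀ x ∈ spectrum ℝ V, 0 < x := by
    intro x hx
    rw [Matrix.IsHermitian.spectrum_real_eq_range_eigenvalues hVpd.1] at hx
    obtain ⟨i, rfl⟩ := hx
    exact hVpd.eigenvalues_pos i
  have hcont : ∀ f : ℝ → ℝ, ContinuousOn f (spectrum ℝ V) :=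
    (Matrix.finite_real_spectrum).continuousOn
  rw [mpow, mpow, ← cfc_mul _ _ V (hcont _) (hcont _)]
  have heq : (spectrum ℝ V).EqOn (fun x => x ^ s * x ^ (-s)) (fun _ => 1) := by
    intro x hx
    have hxpos := hspec x hx
    simp only
    rw [← Real.rpow_add hxpos, add_neg_cancel, Real.rpow_zero]
  rw [cfc_congr heq, cfc_const_one ℝ V hselfadj]

/-- For `V` circulant symmetric positive definite and
`Q = V^{-p} P V^{p} P` with blocks `[[Q', Q''], [Q'', Q']]`, one has
`(Q' + Q''F)(Q' - Q''F) = I`, i.e. `Q' + Q''F` is the inverse of `Q' - Q''F`. -/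
theorem Q_blocks_mutually_inverse
    (m : ℕ) (hm : 0 < m)
    (v : Fin (m + m) → ℝ) (hv : ∀ l, v (-l) = v l)
    (V : Matrix (Fin (m + m)) (Fin (m + m)) ℝ) (hV : V = Matrix.circulant v)
    (hVpd : V.PosDef)
    (p : ℝ)
    (P : Matrix (Fin (m + m)) (Fin (m + m)) ℝ)
    (hP : P = Matrix.diagonal (fun i : Fin (m + m) => if (i : ℕ) < m then (1 : ℝ) else -1))
    (Q : Matrix (Fin (m + m)) (Fin (m + m)) ℝ)
    (hQ : Q = mpow V (-p) * P * mpow V p * P)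
    (Q₁ Q₂ : Matrix (Fin m) (Fin m) ℝ)
    (hQ₁ : ∀ i j, Q₁ i j = Q (Fin.castAdd m i) (Fin.castAdd m j))
    (hQ₂ : ∀ i j, Q₂ i j = Q (Fin.castAdd m i) (Fin.natAdd m j)) :
    (Q₁ + Q₂ * flipMat m) * (Q₁ - Q₂ * flipMat m) = 1 := by
  haveI : NeZero (m + m) := ⟨by omega⟩
  set J : Matrix (Fin (m + m)) (Fin (m + m)) ℝ := flipMat (m + m) with hJdef
  have hJJ : J * J = 1 := flipMat_mul_self (m + m)
  have hJM : ∀ M : Matrix (Fin (m + m)) (Fin (m + m)) ℝ,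
      J * M * J = M.submatrix Fin.rev Fin.rev := by
    intro M
    rw [flipMat_mul, mul_flipMat, Matrix.submatrix_submatrix]
    rfl
  have hrevsub : ∀ i j : Fin (m + m), Fin.rev i - Fin.rev j = j - i := by
    intro i j
    have hi := i.isLt; have hj := j.isLt
    apply Fin.ext
    rw [Fin.sub_def, Fin.sub_def]
    simp only [Fin.val_rev]
    congr 1
    omega
  have hJstar : star J = J := by
    ext i j
    show star (J j i) = J i j
    rw [star_trivial]
    show flipMat (m + m) j i = flipMat (m + m) i j
    show (if (j : ℕ) + (i : ℕ) = (m + m) - 1 then (1:ℝ) else 0) = _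
    rw [Nat.add_comm]
    rfl
  have hJV : J * V * J = V := by
    rw [hJM]
    ext i j
    rw [hV]
    show Matrix.circulant v (Fin.rev i) (Fin.rev j) = Matrix.circulant v i j
    rw [Matrix.circulant_apply, Matrix.circulant_apply, hrevsub, ← neg_sub i j, hv]
  have hJP : J * P * J = -P := by
    rw [hJM, hP]
    ext i j
    simp only [Matrix.submatrix_apply, Matrix.neg_apply]
    rcases eq_or_ne i j with rfl | h
    · rw [Matrix.diagonal_apply_eq, Matrix.diagonal_apply_eq]
      have hi := i.isLt
      rw [Fin.val_rev]
      split_ifs <;> first | (exfalso; omega) | norm_num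
    · rw [Matrix.diagonal_apply_ne _ (fun hc => h (Fin.rev_injective hc)),
        Matrix.diagonal_apply_ne _ h, neg_zero]
  have hPP : P * P = 1 := by
    have hsq : (fun i : Fin (m + m) =>
        (if (i:ℕ) < m then (1:ℝ) else -1) * (if (i:ℕ) < m then (1:ℝ) else -1)) =
        fun _ => (1:ℝ) := by
      funext i
      split_ifs <;> norm_num
    rw [hP, Matrix.diagonal_mul_diagonal, hsq, Matrix.diagonal_one]
  have h1 : mpow V (-p) * mpow V p = 1 := by
    have := mpow_mul_mpow_neg V hVpd (-p); rwa [neg_neg] at this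
  have h2 : mpow V p * mpow V (-p) = 1 := mpow_mul_mpow_neg V hVpd p
  -- E1 : Q * (P * Q * P) = 1
  have hP2 : ∀ X : Matrix (Fin (m + m)) (Fin (m + m)) ℝ, P * (P * X) = X := fun X => by
    rw [← mul_assoc, hPP, one_mul]
  have hV2 : ∀ X : Matrix (Fin (m + m)) (Fin (m + m)) ℝ,
      mpow V p * (mpow V (-p) * X) = X := fun X => by
    rw [← mul_assoc, h2, one_mul]
  have E1 : Q * (P * Q * P) = 1 := by
    rw [hQ]
    simp only [mul_assoc]
    rw [hPP, mul_one, hP2, hV2, hP2, h1]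
  -- E2 : J * Q * J = Q
  have ins : ∀ X Y : Matrix (Fin (m + m)) (Fin (m + m)) ℝ,
      J * (X * Y) * J = (J * X * J) * (J * Y * J) := by
    intro X Y
    calc J * (X * Y) * J = J * (X * (J * J) * Y) * J := by rw [hJJ, mul_one]
      _ = (J * X * J) * (J * Y * J) := by simp only [mul_assoc]
  have E2 : J * Q * J = Q := by
    rw [hQ, ins, ins, ins, conj_mpow V J hVpd hJJ hJstar hJV, conj_mpow V J hVpd hJJ hJstar hJV,
      hJP]
    simp only [mul_neg, neg_mul, neg_neg]
  -- move to the `Fin m ⊕ Fin m` world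
  set ρ := Matrix.reindexAlgEquiv ℝ ℝ
    (finSumFinEquiv (m := m) (n := m)).symm with hρdef
  have hρapp : ∀ (M : Matrix (Fin (m + m)) (Fin (m + m)) ℝ) (x y : Fin m ⊕ Fin m),
      ρ M x y = M (finSumFinEquiv x) (finSumFinEquiv y) := by
    intro M x y
    simp [hρdef, Matrix.reindexAlgEquiv_apply, Matrix.reindex_apply]
  have E1' : ρ Q * (ρ P * ρ Q * ρ P) = 1 := by
    simpa only [_root_.map_mul, _root_.map_one] using congrArg ρ E1
  have E2' : ρ J * ρ Q * ρ J = ρ Q := by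
    simpa only [_root_.map_mul] using congrArg ρ E2
  set F := flipMat m with hFdef
  have hFF : F * F = 1 := flipMat_mul_self m
  set A := (ρ Q).toBlocks₁₁ with hA
  set B := (ρ Q).toBlocks₁₂ with hB
  set C := (ρ Q).toBlocks₂₁ with hC
  set D := (ρ Q).toBlocks₂₂ with hD
  have hABCD : ρ Q = Matrix.fromBlocks A B C D := (Matrix.fromBlocks_toBlocks (ρ Q)).symm
  have hρP : ρ P = Matrix.fromBlocks 1 0 0 (-1) := by
    ext x y
    rcases x with i | i <;> rcases y with j | j <;>
      rw [hρapp, hP] <;>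
      simp only [finSumFinEquiv_apply_left, finSumFinEquiv_apply_right,
        Matrix.fromBlocks_apply₁₁, Matrix.fromBlocks_apply₁₂, Matrix.fromBlocks_apply₂₁,
        Matrix.fromBlocks_apply₂₂]
    · rcases eq_or_ne i j with rfl | h
      · rw [Matrix.diagonal_apply_eq, Matrix.one_apply_eq, if_pos]
        simpa using i.isLt
      · rw [Matrix.diagonal_apply_ne _ (fun hc => h (Fin.ext (by simpa using congrArg Fin.val hc))),
          Matrix.one_apply_ne h]
    · rw [Matrix.diagonal_apply_ne, Matrix.zero_apply]
      intro hc
      have := congrArg Fin.val hc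
      simp only [Fin.coe_castAdd, Fin.coe_natAdd] at this
      have := j.isLt
      omega
    · rw [Matrix.diagonal_apply_ne, Matrix.zero_apply]
      intro hc
      have := congrArg Fin.val hc
      simp only [Fin.coe_castAdd, Fin.coe_natAdd] at this
      have := j.isLt
      omega
    · rcases eq_or_ne i j with rfl | h
      · rw [Matrix.diagonal_apply_eq, Matrix.neg_apply, Matrix.one_apply_eq, if_neg]
        simp only [Fin.coe_natAdd]
        omega
      · rw [Matrix.diagonal_apply_ne _ (fun hc => h (Fin.ext (by simpa using congrArg Fin.val hc))),
          Matrix.neg_apply, Matrix.one_apply_ne h, neg_zero]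
  have hρJ : ρ J = Matrix.fromBlocks 0 F F 0 := by
    ext x y
    rcases x with i | i <;> rcases y with j | j <;>
      rw [hρapp] <;>
      simp only [finSumFinEquiv_apply_left, finSumFinEquiv_apply_right,
        Matrix.fromBlocks_apply₁₁, Matrix.fromBlocks_apply₁₂, Matrix.fromBlocks_apply₂₁,
        Matrix.fromBlocks_apply₂₂, Matrix.zero_apply, hJdef, hFdef] <;>
      show (if _ then (1:ℝ) else 0) = _ <;>
      [show _ = (0:ℝ); show _ = (if (i:ℕ) + (j:ℕ) = m - 1 then (1:ℝ) else 0);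
       show _ = (if (i:ℕ) + (j:ℕ) = m - 1 then (1:ℝ) else 0); show _ = (0:ℝ)]
    · rw [if_neg]
      have hi := i.isLt; have hj := j.isLt
      simp only [Fin.coe_castAdd]
      omega
    · refine (if_congr ?_ rfl rfl)
      have hi := i.isLt; have hj := j.isLt
      simp only [Fin.coe_castAdd, Fin.coe_natAdd]
      omega
    · refine (if_congr ?_ rfl rfl)
      have hi := i.isLt; have hj := j.isLt
      simp only [Fin.coe_castAdd, Fin.coe_natAdd]
      omega
    · rw [if_neg]
      have hi := i.isLt; have hj := j.isLt
      simp only [Fin.coe_natAdd]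
      omega
  -- extract block identities
  rw [hABCD, hρJ] at E2'
  rw [Matrix.fromBlocks_multiply, Matrix.fromBlocks_multiply] at E2'
  simp only [Matrix.zero_mul, Matrix.mul_zero, add_zero, zero_add, Matrix.mul_assoc] at E2'
  have hCeq : F * (B * F) = C := congrArg Matrix.toBlocks₂₁ E2'
  have hDeq : F * (A * F) = D := congrArg Matrix.toBlocks₂₂ E2'
  rw [hABCD, hρP] at E1'
  rw [Matrix.fromBlocks_multiply, Matrix.fromBlocks_multiply, Matrix.fromBlocks_multiply,
    ← Matrix.fromBlocks_one] at E1'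
  simp only [Matrix.zero_mul, Matrix.mul_zero, add_zero, zero_add, Matrix.one_mul,
    Matrix.mul_one, Matrix.neg_mul, Matrix.mul_neg, neg_neg] at E1'
  have hi : A * A + -(B * C) = 1 := congrArg Matrix.toBlocks₁₁ E1'
  have hii : -(A * B) + B * D = 0 := congrArg Matrix.toBlocks₁₂ E1'
  have hBD : B * D = A * B := by linear_combination (norm := noncomm_ring) hii
  -- identify `A = Q₁`, `B = Q₂`
  have hAQ : A = Q₁ := by
    ext i j
    rw [hQ₁, hA]
    show ρ Q (Sum.inl i) (Sum.inl j) = _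
    rw [hρapp]
    simp [finSumFinEquiv_apply_left]
  have hBQ : B = Q₂ := by
    ext i j
    rw [hQ₂, hB]
    show ρ Q (Sum.inl i) (Sum.inr j) = _
    rw [hρapp]
    simp [finSumFinEquiv_apply_left, finSumFinEquiv_apply_right]
  rw [← hAQ, ← hBQ]
  have hFA : F * A = D * F := by
    rw [← hDeq, Matrix.mul_assoc, Matrix.mul_assoc, hFF, Matrix.mul_one]
  have hBFBF : (B * F) * (B * F) = B * C := by
    rw [← hCeq]
    noncomm_ring
  have hBFA : (B * F) * A = A * (B * F) := by
    calc (B * F) * A = B * (F * A) := by rw [Matrix.mul_assoc]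
      _ = B * (D * F) := by rw [hFA]
      _ = (B * D) * F := by rw [Matrix.mul_assoc]
      _ = (A * B) * F := by rw [hBD]
      _ = A * (B * F) := by rw [Matrix.mul_assoc]
  calc (A + B * F) * (A - B * F)
      = A * A - A * (B * F) + ((B * F) * A - (B * F) * (B * F)) := by noncomm_ring
    _ = A * A - A * (B * F) + (A * (B * F) - B * C) := by rw [hBFA, hBFBF]
    _ = A * A + -(B * C) := by abel
    _ = 1 := hi
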